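/- arXiv:2209.01813 — 2 statements merged into one kernel-verified Lean document; each statement's English description precedes it below -/
import Mathlib

section
/- Let m ≥ 1 and let F_i, F_j ∈ ℝ^{m×2}. Then the supremum over all orthogonal matrices Q ∈ O(2) of tr(F_i Qᵀ F_jᵀ) equals √(‖F_iᵀF_j‖_F² + 2·|det(F_iᵀF_j)|), which is the sum of the two singular values of the 2×2 matrix F_iᵀF_j. -/
open Matrix

/-- The Frobenius norm of a real matrix. -/
noncomputable def frobNorm {m n : ℕ} (A : Matrix (Fin m) (Fin n) ℝ) : ℝ :=
  Real.sqrt (Matrix.trace (Aᵀ * A))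

private lemma stmt4.le_sqrt_of_sq_le {v t : ℝ} (h : v^2 ≤ t) : v ≤ Real.sqrt t :=
  calc v ≤ |v| := le_abs_self v
    _ = Real.sqrt (v^2) := (Real.sqrt_sq_eq_abs v).symm
    _ ≤ Real.sqrt t := Real.sqrt_le_sqrt h

private lemma stmt4.core (a b c d x y z w : ℝ) (h1 : x^2+z^2=1) (h2 : y^2+w^2=1)
    (h3 : x*y+z*w=0) :
    (a*x + c*y + b*z + d*w)^2 ≤ a^2+b^2+c^2+d^2 + 2*|a*d-b*c| := by
  have hsq : (x*w - y*z) * (x*w - y*z) = 1 := by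
    linear_combination (y^2+w^2)*h1 + h2 - (x*y+z*w)*h3
  rcases mul_self_eq_one_iff.mp hsq with h | h
  · have e0 : (w-x)^2 + (y+z)^2 = 0 := by linear_combination h1 + h2 - 2*h
    have e1 : w = x := by nlinarith [sq_nonneg (w-x), sq_nonneg (y+z)]
    have e2 : y = -z := by nlinarith [sq_nonneg (w-x), sq_nonneg (y+z)]
    rw [e1, e2]
    nlinarith [sq_nonneg ((a+d)*z - (b-c)*x), le_abs_self (a*d-b*c),
      sq_nonneg (a+d), sq_nonneg (b-c), h1]
  · have e0 : (w+x)^2 + (y-z)^2 = 0 := by linear_combination h1 + h2 + 2*h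
    have e1 : w = -x := by nlinarith [sq_nonneg (w+x), sq_nonneg (y-z)]
    have e2 : y = z := by nlinarith [sq_nonneg (w+x), sq_nonneg (y-z)]
    rw [e1, e2]
    nlinarith [sq_nonneg ((a-d)*z - (b+c)*x), neg_abs_le (a*d-b*c),
      sq_nonneg (a-d), sq_nonneg (b+c), h1]

private lemma stmt4.trace_expand (B Q : Matrix (Fin 2) (Fin 2) ℝ) :
    Matrix.trace (Bᵀ * Qᵀ) =
      B 0 0 * Q 0 0 + B 1 0 * Q 0 1 + B 0 1 * Q 1 0 + B 1 1 * Q 1 1 := by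
  simp [Matrix.trace, Matrix.mul_apply, Fin.sum_univ_two, Matrix.transpose_apply]
  ring

private lemma stmt4.frobNorm_sq (B : Matrix (Fin 2) (Fin 2) ℝ) :
    frobNorm B ^ 2 = B 0 0^2 + B 0 1^2 + B 1 0^2 + B 1 1^2 := by
  have h : Matrix.trace (Bᵀ * B) = B 0 0^2 + B 0 1^2 + B 1 0^2 + B 1 1^2 := by
    simp [Matrix.trace, Matrix.mul_apply, Fin.sum_univ_two, Matrix.transpose_apply]
    ring
  rw [frobNorm, Real.sq_sqrt (by rw [h]; positivity), h]

private lemma stmt4.tr2 (p q r s : ℝ) : (!![p, q; r, s])ᵀ = !![p, r; q, s] := by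
  ext i j; fin_cases i <;> fin_cases j <;> rfl

private lemma stmt4.rot_orth (x z : ℝ) (h : x^2+z^2 = 1) :
    (!![x, -z; z, x])ᵀ * !![x, -z; z, x] = 1 := by
  rw [stmt4.tr2, Matrix.mul_fin_two, Matrix.one_fin_two]; ring_nf; rw [h]

private lemma stmt4.refl_orth (x z : ℝ) (h : x^2+z^2 = 1) :
    (!![x, z; z, -x])ᵀ * !![x, z; z, -x] = 1 := by
  rw [stmt4.tr2, Matrix.mul_fin_two, Matrix.one_fin_two]; ring_nf; rw [h]

set_option maxHeartbeats 1000000 in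
/-- The supremum over orthogonal `Q ∈ O(2)` of `tr(F_i Qᵀ F_jᵀ)` equals
`√(‖F_iᵀF_j‖_F² + 2|det(F_iᵀF_j)|)`, the sum of the two singular values of
`F_iᵀF_j`. -/
theorem stmt4 (m : ℕ) (hm : 1 ≤ m) (Fi Fj : Matrix (Fin m) (Fin 2) ℝ) :
    sSup {x : ℝ | ∃ Q : Matrix (Fin 2) (Fin 2) ℝ,
        Qᵀ * Q = 1 ∧ x = Matrix.trace (Fi * Qᵀ * Fjᵀ)}
      = Real.sqrt ((frobNorm (Fiᵀ * Fj)) ^ 2 + 2 * |(Fiᵀ * Fj).det|) := by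
  set A := Fiᵀ * Fj with hA
  set a := A 0 0 with ha
  set b := A 0 1 with hb
  set c := A 1 0 with hc
  set d := A 1 1 with hd
  have key : ∀ Q : Matrix (Fin 2) (Fin 2) ℝ,
      Matrix.trace (Fi * Qᵀ * Fjᵀ) = a * Q 0 0 + c * Q 0 1 + b * Q 1 0 + d * Q 1 1 := by
    intro Q
    have h2 : Fjᵀ * Fi = Aᵀ := by
      rw [hA, Matrix.transpose_mul, Matrix.transpose_transpose]
    calc Matrix.trace (Fi * Qᵀ * Fjᵀ)
        = Matrix.trace ((Fjᵀ * Fi) * Qᵀ) := by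
          rw [Matrix.trace_mul_comm, ← Matrix.mul_assoc]
      _ = Matrix.trace (Aᵀ * Qᵀ) := by rw [h2]
      _ = a * Q 0 0 + c * Q 0 1 + b * Q 1 0 + d * Q 1 1 := stmt4.trace_expand A Q
  have hdet : A.det = a*d - b*c := by rw [Matrix.det_fin_two]
  have hgoal : Real.sqrt (frobNorm A ^ 2 + 2 * |A.det|) =
      Real.sqrt (a^2+b^2+c^2+d^2 + 2*|a*d-b*c|) := by
    rw [stmt4.frobNorm_sq, hdet]
  rw [hgoal]
  set T := Real.sqrt (a^2+b^2+c^2+d^2 + 2*|a*d-b*c|) with hT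
  apply IsGreatest.csSup_eq
  constructor
  · -- membership : ∃ Q orthogonal with T = trace
    rcases abs_cases (a*d - b*c) with ⟨habs, hDpos⟩ | ⟨habs, hDneg⟩
    · -- D ≥ 0 : use a rotation
      have hpq : (a+d)^2 + (b-c)^2 = a^2+b^2+c^2+d^2 + 2*|a*d-b*c| := by
        rw [habs]; ring
      have hT2 : T^2 = (a+d)^2 + (b-c)^2 := by
        rw [hT, Real.sq_sqrt (by rw [← hpq]; positivity), hpq]
      by_cases hT0 : T = 0
      · refine ⟨1, ?_, ?_⟩
        · simp
        · have h0 : (a+d)^2 + (b-c)^2 = 0 := by rw [← hT2, hT0]; ring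
          have hp : a + d = 0 := by nlinarith [sq_nonneg (a+d), sq_nonneg (b-c)]
          rw [key, hT0]
          simp [Matrix.one_apply]
          linarith
      · have hTpos : 0 < T := lt_of_le_of_ne (Real.sqrt_nonneg _) (Ne.symm hT0)
        set x := (a+d)/T with hx
        set z := (b-c)/T with hz
        have hxz : x^2 + z^2 = 1 := by
          rw [hx, hz]
          field_simp
          linear_combination hT2.symm
        refine ⟨!![x, -z; z, x], stmt4.rot_orth x z hxz, ?_⟩
        rw [key]
        simp only [show (!![x, -z; z, x] : Matrix (Fin 2) (Fin 2) ℝ) 0 0 = x by simp,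
          show (!![x, -z; z, x] : Matrix (Fin 2) (Fin 2) ℝ) 0 1 = -z by simp,
          show (!![x, -z; z, x] : Matrix (Fin 2) (Fin 2) ℝ) 1 0 = z by simp,
          show (!![x, -z; z, x] : Matrix (Fin 2) (Fin 2) ℝ) 1 1 = x by simp]
        rw [hx, hz]
        field_simp
        linear_combination hT2
    · -- D < 0 : use a reflection
      have hpq : (a-d)^2 + (b+c)^2 = a^2+b^2+c^2+d^2 + 2*|a*d-b*c| := by
        rw [habs]; ring
      have hT2 : T^2 = (a-d)^2 + (b+c)^2 := by
        rw [hT, Real.sq_sqrt (by rw [← hpq]; positivity), hpq]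
      by_cases hT0 : T = 0
      · refine ⟨!![1, 0; 0, -1], stmt4.refl_orth 1 0 (by norm_num), ?_⟩
        have h0 : (a-d)^2 + (b+c)^2 = 0 := by rw [← hT2, hT0]; ring
        have hp : a - d = 0 := by nlinarith [sq_nonneg (a-d), sq_nonneg (b+c)]
        rw [key, hT0]
        simp
        linarith
      · have hTpos : 0 < T := lt_of_le_of_ne (Real.sqrt_nonneg _) (Ne.symm hT0)
        set x := (a-d)/T with hx
        set z := (b+c)/T with hz
        have hxz : x^2 + z^2 = 1 := by
          rw [hx, hz]
          field_simp
          linear_combination hT2.symm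
        refine ⟨!![x, z; z, -x], stmt4.refl_orth x z hxz, ?_⟩
        rw [key]
        simp only [show (!![x, z; z, -x] : Matrix (Fin 2) (Fin 2) ℝ) 0 0 = x by simp,
          show (!![x, z; z, -x] : Matrix (Fin 2) (Fin 2) ℝ) 0 1 = z by simp,
          show (!![x, z; z, -x] : Matrix (Fin 2) (Fin 2) ℝ) 1 0 = z by simp,
          show (!![x, z; z, -x] : Matrix (Fin 2) (Fin 2) ℝ) 1 1 = -x by simp]
        rw [hx, hz]
        field_simp
        linear_combination hT2
  · -- upper bound
    rintro v ⟨Q, hQ, rfl⟩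
    rw [key]
    apply stmt4.le_sqrt_of_sq_le
    have g1 : (Qᵀ * Q) 0 0 = (1 : Matrix (Fin 2) (Fin 2) ℝ) 0 0 := by rw [hQ]
    have g2 : (Qᵀ * Q) 1 1 = (1 : Matrix (Fin 2) (Fin 2) ℝ) 1 1 := by rw [hQ]
    have g3 : (Qᵀ * Q) 0 1 = (1 : Matrix (Fin 2) (Fin 2) ℝ) 0 1 := by rw [hQ]
    simp [Matrix.mul_apply, Fin.sum_univ_two, Matrix.transpose_apply,
      Matrix.one_apply] at g1 g2 g3
    exact stmt4.core a b c d (Q 0 0) (Q 0 1) (Q 1 0) (Q 1 1)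
      (by linear_combination g1) (by linear_combination g2) (by linear_combination g3)
end

section
/- Let m ≥ 1 and let F_i, F_j ∈ ℝ^{m×2}. Then the infimum over all orthogonal matrices Q ∈ O(2) of ‖F_j Q − F_i‖_F² equals tr(F_i F_iᵀ) + tr(F_j F_jᵀ) − 2·√(‖F_iᵀF_j‖_F² + 2·|det(F_iᵀF_j)|). -/
open Matrix

set_option maxHeartbeats 1000000

lemma trAtA_nonneg {m n : ℕ} (A : Matrix (Fin m) (Fin n) ℝ) : 0 ≤ Matrix.trace (Aᵀ * A) := by
  simp only [Matrix.trace, Matrix.diag, Matrix.mul_apply, Matrix.transpose_apply]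
  exact Finset.sum_nonneg fun j _ => Finset.sum_nonneg fun i _ => mul_self_nonneg _

lemma frob_sq {m n : ℕ} (A : Matrix (Fin m) (Fin n) ℝ) :
    frobNorm A ^ 2 = Matrix.trace (Aᵀ * A) :=
  Real.sq_sqrt (trAtA_nonneg A)

lemma frob_expand {m : ℕ} (Fi Fj : Matrix (Fin m) (Fin 2) ℝ) (Q : Matrix (Fin 2) (Fin 2) ℝ)
    (hQ : Qᵀ * Q = 1) :
    frobNorm (Fj * Q - Fi) ^ 2
      = Matrix.trace (Fi * Fiᵀ) + Matrix.trace (Fj * Fjᵀ)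
        - 2 * Matrix.trace ((Fiᵀ * Fj) * Q) := by
  rw [frob_sq]
  have hQQ : Q * Qᵀ = 1 := mul_eq_one_comm.mp hQ
  have e : (Fj * Q - Fi)ᵀ * (Fj * Q - Fi)
      = Qᵀ * Fjᵀ * (Fj * Q) - Qᵀ * Fjᵀ * Fi - Fiᵀ * (Fj * Q) + Fiᵀ * Fi := by
    simp [Matrix.transpose_sub, Matrix.transpose_mul, Matrix.sub_mul, Matrix.mul_sub]
    abel
  rw [e, Matrix.trace_add, Matrix.trace_sub, Matrix.trace_sub]
  have h1 : Matrix.trace (Qᵀ * Fjᵀ * (Fj * Q)) = Matrix.trace (Fj * Fjᵀ) := by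
    rw [Matrix.mul_assoc, Matrix.trace_mul_comm]
    have : Fjᵀ * (Fj * Q) * Qᵀ = Fjᵀ * Fj := by
      rw [← Matrix.mul_assoc, Matrix.mul_assoc (Fjᵀ * Fj), hQQ, Matrix.mul_one]
    rw [this, Matrix.trace_mul_comm]
  have h2 : Matrix.trace (Qᵀ * Fjᵀ * Fi) = Matrix.trace ((Fiᵀ * Fj) * Q) := by
    rw [← Matrix.trace_transpose (Qᵀ * Fjᵀ * Fi)]
    simp [Matrix.transpose_mul, Matrix.mul_assoc]
  have h3 : Matrix.trace (Fiᵀ * (Fj * Q)) = Matrix.trace ((Fiᵀ * Fj) * Q) := by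
    rw [Matrix.mul_assoc]
  have h4 : Matrix.trace (Fiᵀ * Fi) = Matrix.trace (Fi * Fiᵀ) := Matrix.trace_mul_comm _ _
  rw [h1, h2, h3, h4]; ring

lemma tr_sq_le (N : Matrix (Fin 2) (Fin 2) ℝ) :
    (Matrix.trace N) ^ 2 ≤ Matrix.trace (Nᵀ * N) + 2 * N.det := by
  simp only [Matrix.trace, Matrix.diag, Matrix.mul_apply, Matrix.transpose_apply,
    Matrix.det_fin_two, Fin.sum_univ_two]
  nlinarith [sq_nonneg (N 0 1 - N 1 0)]

lemma tr_le (M Q : Matrix (Fin 2) (Fin 2) ℝ) (hQ : Qᵀ * Q = 1) :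
    Matrix.trace (M * Q) ≤ Real.sqrt (Matrix.trace (Mᵀ * M) + 2 * |M.det|) := by
  have hQQ : Q * Qᵀ = 1 := mul_eq_one_comm.mp hQ
  have hNN : Matrix.trace ((M * Q)ᵀ * (M * Q)) = Matrix.trace (Mᵀ * M) := by
    rw [Matrix.transpose_mul, Matrix.mul_assoc, Matrix.trace_mul_comm]
    have : Mᵀ * (M * Q) * Qᵀ = Mᵀ * M := by
      rw [← Matrix.mul_assoc, Matrix.mul_assoc (Mᵀ * M), hQQ, Matrix.mul_one]
    rw [this]
  have hdetQ : Q.det = 1 ∨ Q.det = -1 := by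
    have h : Q.det * Q.det = 1 := by
      have := congrArg Matrix.det hQ
      simpa [Matrix.det_mul, Matrix.det_transpose] using this
    rcases mul_self_eq_one_iff.mp h with h | h
    · exact Or.inl h
    · exact Or.inr h
  have hdet : (M * Q).det ≤ |M.det| := by
    rw [Matrix.det_mul]
    rcases hdetQ with h | h <;> rw [h] <;> cases abs_cases M.det <;> simp <;> linarith
  calc Matrix.trace (M * Q) ≤ |Matrix.trace (M * Q)| := le_abs_self _
    _ = Real.sqrt ((Matrix.trace (M * Q)) ^ 2) := (Real.sqrt_sq_eq_abs _).symm
    _ ≤ Real.sqrt (Matrix.trace (Mᵀ * M) + 2 * |M.det|) := by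
        apply Real.sqrt_le_sqrt
        have := tr_sq_le (M * Q)
        rw [hNN] at this
        linarith

lemma transpose_fin_two_of (a b c d : ℝ) : (!![a, b; c, d])ᵀ = !![a, c; b, d] := by
  ext i j
  fin_cases i <;> fin_cases j <;> rfl

lemma rot_orth (p q t : ℝ) (ht0 : 0 < t) (ht2 : t^2 = p^2 + q^2) :
    (!![p/t, -(q/t); q/t, p/t])ᵀ * (!![p/t, -(q/t); q/t, p/t]) = 1 := by
  rw [transpose_fin_two_of, Matrix.mul_fin_two, Matrix.one_fin_two]
  ext i j
  fin_cases i <;> fin_cases j <;> simp <;> field_simp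
  all_goals first | ring1 | linarith [ht2]

lemma refl_orth (p q t : ℝ) (ht0 : 0 < t) (ht2 : t^2 = p^2 + q^2) :
    (!![p/t, q/t; q/t, -(p/t)])ᵀ * (!![p/t, q/t; q/t, -(p/t)]) = 1 := by
  rw [transpose_fin_two_of, Matrix.mul_fin_two, Matrix.one_fin_two]
  ext i j
  fin_cases i <;> fin_cases j <;> simp <;> field_simp
  all_goals first | ring1 | linarith [ht2]

lemma trAtA_expand (M : Matrix (Fin 2) (Fin 2) ℝ) :
    Matrix.trace (Mᵀ * M) = (M 0 0)^2 + (M 0 1)^2 + (M 1 0)^2 + (M 1 1)^2 := by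
  simp only [Matrix.trace, Matrix.diag, Matrix.mul_apply, Matrix.transpose_apply,
    Fin.sum_univ_two]
  ring

lemma exists_max (M : Matrix (Fin 2) (Fin 2) ℝ) :
    ∃ Q : Matrix (Fin 2) (Fin 2) ℝ, Qᵀ * Q = 1 ∧
      Matrix.trace (M * Q) = Real.sqrt (Matrix.trace (Mᵀ * M) + 2 * |M.det|) := by
  rcases le_or_gt 0 M.det with hd | hd
  · have hval : Matrix.trace (Mᵀ * M) + 2 * |M.det|
        = (M 0 0 + M 1 1)^2 + (M 0 1 - M 1 0)^2 := by
      rw [abs_of_nonneg hd, trAtA_expand, Matrix.det_fin_two]; ring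
    rcases eq_or_ne ((M 0 0 + M 1 1)^2 + (M 0 1 - M 1 0)^2) 0 with h0 | h0
    · have hp0 : M 0 0 + M 1 1 = 0 := by
        nlinarith [sq_nonneg (M 0 0 + M 1 1), sq_nonneg (M 0 1 - M 1 0)]
      refine ⟨1, by simp, ?_⟩
      rw [hval, h0, Real.sqrt_zero, Matrix.mul_one, Matrix.trace_fin_two]
      linarith
    · have hs : 0 < (M 0 0 + M 1 1)^2 + (M 0 1 - M 1 0)^2 :=
        lt_of_le_of_ne (by positivity) (Ne.symm h0)
      set t := Real.sqrt ((M 0 0 + M 1 1)^2 + (M 0 1 - M 1 0)^2) with ht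
      have ht0 : 0 < t := Real.sqrt_pos.mpr hs
      have ht2 : t^2 = (M 0 0 + M 1 1)^2 + (M 0 1 - M 1 0)^2 := Real.sq_sqrt hs.le
      refine ⟨!![(M 0 0 + M 1 1)/t, -((M 0 1 - M 1 0)/t);
                 (M 0 1 - M 1 0)/t, (M 0 0 + M 1 1)/t], rot_orth _ _ _ ht0 ht2, ?_⟩
      rw [hval, ← ht, Matrix.trace_fin_two]
      simp only [Matrix.mul_apply, Fin.sum_univ_two, Matrix.cons_val', Matrix.cons_val_zero,
        Matrix.cons_val_one, Matrix.head_cons, Matrix.empty_val', Matrix.cons_val_fin_one,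
        Matrix.head_fin_const, Matrix.of_apply]
      field_simp
      first | linear_combination ht2 | linear_combination -ht2
  · have hval : Matrix.trace (Mᵀ * M) + 2 * |M.det|
        = (M 0 0 - M 1 1)^2 + (M 0 1 + M 1 0)^2 := by
      rw [abs_of_neg hd, trAtA_expand, Matrix.det_fin_two]; ring
    have hs : 0 < (M 0 0 - M 1 1)^2 + (M 0 1 + M 1 0)^2 := by
      rw [← hval]
      have h2 : 0 ≤ Matrix.trace (Mᵀ * M) := by rw [trAtA_expand]; positivity
      have h3 : 0 < |M.det| := abs_pos.mpr (ne_of_lt hd)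
      linarith
    set t := Real.sqrt ((M 0 0 - M 1 1)^2 + (M 0 1 + M 1 0)^2) with ht
    have ht0 : 0 < t := Real.sqrt_pos.mpr hs
    have ht2 : t^2 = (M 0 0 - M 1 1)^2 + (M 0 1 + M 1 0)^2 := Real.sq_sqrt hs.le
    refine ⟨!![(M 0 0 - M 1 1)/t, (M 0 1 + M 1 0)/t;
               (M 0 1 + M 1 0)/t, -((M 0 0 - M 1 1)/t)], refl_orth _ _ _ ht0 ht2, ?_⟩
    rw [hval, ← ht, Matrix.trace_fin_two]
    simp only [Matrix.mul_apply, Fin.sum_univ_two, Matrix.cons_val', Matrix.cons_val_zero,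
      Matrix.cons_val_one, Matrix.head_cons, Matrix.empty_val', Matrix.cons_val_fin_one,
      Matrix.head_fin_const, Matrix.of_apply]
    field_simp
    first | linear_combination ht2 | linear_combination -ht2

/-- The infimum over orthogonal `Q ∈ O(2)` of `‖F_j Q − F_i‖_F²` equals
`tr(F_i F_iᵀ) + tr(F_j F_jᵀ) − 2√(‖F_iᵀF_j‖_F² + 2|det(F_iᵀF_j)|)`. -/
theorem stmt5 (m : ℕ) (hm : 1 ≤ m) (Fi Fj : Matrix (Fin m) (Fin 2) ℝ) :
    sInf {x : ℝ | ∃ Q : Matrix (Fin 2) (Fin 2) ℝ,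
        Qᵀ * Q = 1 ∧ x = (frobNorm (Fj * Q - Fi)) ^ 2}
      = Matrix.trace (Fi * Fiᵀ) + Matrix.trace (Fj * Fjᵀ)
        - 2 * Real.sqrt ((frobNorm (Fiᵀ * Fj)) ^ 2 + 2 * |(Fiᵀ * Fj).det|) := by
  set M := Fiᵀ * Fj with hM
  set T := Matrix.trace (Fi * Fiᵀ) + Matrix.trace (Fj * Fjᵀ)
        - 2 * Real.sqrt ((frobNorm M) ^ 2 + 2 * |M.det|) with hT
  have hfs : (frobNorm M) ^ 2 = Matrix.trace (Mᵀ * M) := frob_sq M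
  -- lower bound
  have lb : ∀ x ∈ {x : ℝ | ∃ Q : Matrix (Fin 2) (Fin 2) ℝ,
      Qᵀ * Q = 1 ∧ x = (frobNorm (Fj * Q - Fi)) ^ 2}, T ≤ x := by
    rintro x ⟨Q, hQ, rfl⟩
    rw [frob_expand Fi Fj Q hQ, hT, hfs]
    have := tr_le M Q hQ
    linarith
  -- membership
  have mem : T ∈ {x : ℝ | ∃ Q : Matrix (Fin 2) (Fin 2) ℝ,
      Qᵀ * Q = 1 ∧ x = (frobNorm (Fj * Q - Fi)) ^ 2} := by
    obtain ⟨Q, hQ, htr⟩ := exists_max M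
    exact ⟨Q, hQ, by rw [frob_expand Fi Fj Q hQ, htr, hT, hfs]⟩
  exact le_antisymm (csInf_le ⟨T, lb⟩ mem) (le_csInf ⟨T, mem⟩ lb)
end
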